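/- For any real q > 0 and p > 0, ∫₀^∞ x·arctan(qx)/(p² + x²)² dx = πq/(4p(1+pq)). -/

import Mathlib

set_option maxHeartbeats 1000000

open Real MeasureTheory Filter Topology

-- derivative of arctan (c*x)
lemma hasDerivAt_arctan_const_mul (c x : ℝ) :
    HasDerivAt (fun y : ℝ => arctan (c * y)) (c / (1 + (c * x) ^ 2)) x := by
  have h := (Real.hasDerivAt_arctan (c * x)).comp x ((hasDerivAt_id x).const_mul c)
  exact h.congr_deriv (by ring)

lemma tendsto_arctan_comp {f : ℝ → ℝ} (hf : Tendsto f atTop atTop) :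
    Tendsto (fun x => arctan (f x)) atTop (𝓝 (π / 2)) :=
  (tendsto_nhds_of_tendsto_nhdsWithin Real.tendsto_arctan_atTop).comp hf

lemma tendsto_self_div_sq (p : ℝ) (hp : 0 < p) :
    Tendsto (fun x : ℝ => x / (p ^ 2 + x ^ 2)) atTop (𝓝 0) := by
  have h1 : Tendsto (fun x : ℝ => x + p ^ 2 / x) atTop atTop :=
    tendsto_id.atTop_add (tendsto_const_nhds.div_atTop tendsto_id)
  refine h1.inv_tendsto_atTop.congr' ?_
  filter_upwards [eventually_gt_atTop (0 : ℝ)] with x hx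
  field_simp
  rw [Pi.inv_apply, inv_div, add_comm (x^2), div_mul_cancel₀ _ (by positivity)]

theorem integral_mul_arctan_div_sq_add_sq_sq (p q : ℝ) (hp : 0 < p) (hq : 0 < q) :
    ∫ x in Set.Ioi (0 : ℝ), x * arctan (q * x) / (p ^ 2 + x ^ 2) ^ 2
      = π * q / (4 * p * (1 + p * q)) := by
  have hp0 : p ≠ 0 := hp.ne'
  have hpq1 : (0:ℝ) < 1 + p * q := by positivity
  have hpos : ∀ x ∈ Set.Ioi (0:ℝ), 0 ≤ x * arctan (q * x) / (p ^ 2 + x ^ 2) ^ 2 := by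
    intro x hx
    have hx0 : (0:ℝ) < x := hx
    have ha : 0 < arctan (q * x) := by
      have := Real.arctan_strictMono (show (0:ℝ) < q * x by positivity)
      simpa using this
    positivity
  have hqx : Tendsto (fun x : ℝ => q * x) atTop atTop :=
    tendsto_id.const_mul_atTop hq
  have harc1 : Tendsto (fun x : ℝ => arctan (q * x)) atTop (𝓝 (π / 2)) :=
    tendsto_arctan_comp hqx
  have harc2 : Tendsto (fun x : ℝ => arctan (x / p)) atTop (𝓝 (π / 2)) :=
    tendsto_arctan_comp (tendsto_id.atTop_div_const hp)
  have hden : Tendsto (fun x : ℝ => 2 * (p ^ 2 + x ^ 2)) atTop atTop := by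
    refine Tendsto.const_mul_atTop two_pos ?_
    exact tendsto_atTop_add_const_left _ (p^2) (tendsto_pow_atTop two_ne_zero)
  have hterm1 : Tendsto (fun x : ℝ => -arctan (q * x) / (2 * (p ^ 2 + x ^ 2)))
      atTop (𝓝 0) := harc1.neg.div_atTop hden
  rcases eq_or_ne (p * q) 1 with hpq | hpq
  · -- q = 1/p
    have hq' : q = 1 / p := by field_simp; linarith [hpq]
    subst hq'
    set F : ℝ → ℝ := fun x => -arctan (1 / p * x) / (2 * (p ^ 2 + x ^ 2))
      + x / (4 * p * (p ^ 2 + x ^ 2)) + arctan (1 / p * x) / (4 * p ^ 2) with hF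
    have hderiv : ∀ x ∈ Set.Ici (0:ℝ), HasDerivAt F
        (x * arctan (1 / p * x) / (p ^ 2 + x ^ 2) ^ 2) x := by
      intro x _
      have hpx : (0:ℝ) < p ^ 2 + x ^ 2 := by positivity
      have h1 := hasDerivAt_arctan_const_mul (1/p) x
      have h2 : HasDerivAt (fun y : ℝ => 2 * (p ^ 2 + y ^ 2)) (2 * (2 * x)) x := by
        simpa using ((hasDerivAt_pow 2 x).const_add (p^2)).const_mul 2
      have h2' : HasDerivAt (fun y : ℝ => 4 * p * (p ^ 2 + y ^ 2)) (4 * p * (2 * x)) x := by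
        simpa using ((hasDerivAt_pow 2 x).const_add (p^2)).const_mul (4*p)
      have hA := (h1.neg.div h2 (by positivity))
      have hB := (hasDerivAt_id x).div h2' (by positivity)
      have hC := h1.div_const (4 * p ^ 2)
      have H := (hA.add hB).add hC
      refine H.congr_deriv ?_
      have h1q : (0:ℝ) < 1 + (1/p*x)^2 := by positivity
      simp only [Pi.neg_apply, id]
      field_simp
      ring
    have hlim : Tendsto F atTop (𝓝 (π * (1/p) / (4 * p * (1 + p * (1/p))))) := by
      have ht2 : Tendsto (fun x : ℝ => x / (4 * p * (p ^ 2 + x ^ 2))) atTop (𝓝 0) := by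
        simpa using ((tendsto_self_div_sq p hp).mul_const ((4*p:ℝ)⁻¹)).congr
          (fun x => by rw [mul_comm (4*p) (p^2+x^2), ← div_div, div_eq_mul_inv]; ring)
      have ht3 : Tendsto (fun x : ℝ => arctan (1/p * x) / (4 * p ^ 2)) atTop
          (𝓝 ((π/2) / (4 * p ^ 2))) := by
        exact (tendsto_arctan_comp (tendsto_id.const_mul_atTop (by positivity))).div_const _
      have := (hterm1.add ht2).add ht3
      have heq : π * (1/p) / (4 * p * (1 + p * (1/p))) = 0 + 0 + π/2/(4*p^2) := by
        rw [show (1 + p * (1/p) : ℝ) = 2 by rw [mul_one_div, div_self hp0]; norm_num]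
        rw [zero_add, zero_add, mul_one_div, div_div, div_div,
          div_eq_div_iff (by positivity) (by positivity)]
        ring
      rw [heq]
      exact this
    have key := integral_Ioi_of_hasDerivAt_of_nonneg' hderiv (fun x hx => hpos x hx) hlim
    rw [key, hF]
    simp
  · -- general case
    have hD : p ^ 2 * q ^ 2 - 1 ≠ 0 := by
      intro h
      have : (p*q - 1) * (p*q + 1) = 0 := by nlinarith [h]
      rcases mul_eq_zero.1 this with h' | h'
      · exact hpq (by linarith)
      · nlinarith
    set c1 : ℝ := q ^ 2 / (2 * (p ^ 2 * q ^ 2 - 1)) with hc1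
    set c2 : ℝ := q / (2 * p * (p ^ 2 * q ^ 2 - 1)) with hc2
    set F : ℝ → ℝ := fun x => -arctan (q * x) / (2 * (p ^ 2 + x ^ 2))
      + c1 * arctan (q * x) - c2 * arctan (x / p) with hF
    have hderiv : ∀ x ∈ Set.Ici (0:ℝ), HasDerivAt F
        (x * arctan (q * x) / (p ^ 2 + x ^ 2) ^ 2) x := by
      intro x _
      have hpx : (0:ℝ) < p ^ 2 + x ^ 2 := by positivity
      have h1 := hasDerivAt_arctan_const_mul q x
      have h2 : HasDerivAt (fun y : ℝ => 2 * (p ^ 2 + y ^ 2)) (2 * (2 * x)) x := by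
        simpa using ((hasDerivAt_pow 2 x).const_add (p^2)).const_mul 2
      have h3 : HasDerivAt (fun y : ℝ => arctan (y / p)) (1 / (1 + (x/p)^2) * (1/p)) x := by
        have := (Real.hasDerivAt_arctan (x / p)).comp x ((hasDerivAt_id x).div_const p)
        exact this.congr_deriv (by ring)
      have hA := (h1.neg.div h2 (by positivity))
      have H := (hA.add (h1.const_mul c1)).sub (h3.const_mul c2)
      refine H.congr_deriv ?_
      have h1q : (0:ℝ) < 1 + (q*x)^2 := by positivity
      have h2q : (0:ℝ) < 1 + (x/p)^2 := by positivity
      rw [hc1, hc2]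
      simp only [Pi.neg_apply, id]
      obtain ⟨D, hDd⟩ : ∃ D, D = p ^ 2 * q ^ 2 - 1 := ⟨_, rfl⟩
      rw [← hDd] at hD ⊢
      field_simp
      rw [hDd]
      ring
    have hlim : Tendsto F atTop (𝓝 (π * q / (4 * p * (1 + p * q)))) := by
      have ht2 : Tendsto (fun x : ℝ => c1 * arctan (q * x) - c2 * arctan (x / p)) atTop
          (𝓝 (c1 * (π/2) - c2 * (π/2))) := (harc1.const_mul c1).sub (harc2.const_mul c2)
      have := hterm1.add ht2
      have hD1 : (1 + p*q) ≠ 0 := by positivity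
      have heq : π * q / (4 * p * (1 + p * q)) = 0 + (c1 * (π/2) - c2 * (π/2)) := by
        rw [hc1, hc2]
        obtain ⟨D, hDd⟩ : ∃ D, D = p ^ 2 * q ^ 2 - 1 := ⟨_, rfl⟩
        rw [← hDd] at hD ⊢
        field_simp
        rw [hDd]
        ring
      rw [heq]
      exact this.congr fun x => by rw [hF]; ring
    have key := integral_Ioi_of_hasDerivAt_of_nonneg' hderiv (fun x hx => hpos x hx) hlim
    rw [key, hF]
    simp
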